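/- Let α, β, γ be positive irrational numbers with α + β + γ = 1 such that α > 1/3 and 1, α, β are linearly independent over ℚ. Then there is no partition ℕ = B_α ∪ B̃_β ∪ B̃_γ where B̃_β = (b̃(n)) and B̃_γ = (c̃(n)) are strictly increasing sequences satisfying |b̃(n) - ⌊n/β⌋| ≤ 1 and |c̃(n) - ⌊n/γ⌋| ≤ 1 for all n. -/

import Mathlib

open scoped Classical

def beatty (α : ℝ) : Set ℤ := {m | ∃ n : ℕ, 0 < n ∧ m = ⌊(n : ℝ) / α⌋}

noncomputable def countLe (S : Set ℤ) (m : ℤ) : ℕ :=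
  ((Finset.Icc 1 m).filter (fun k => k ∈ S)).card

open Finset

noncomputable def ee (t : ℝ) : ℂ := Complex.exp ((2 * Real.pi * t : ℝ) * Complex.I)

lemma ee_add (s t : ℝ) : ee (s + t) = ee s * ee t := by
  unfold ee
  rw [← Complex.exp_add]
  congr 1
  push_cast
  ring

lemma ee_norm (t : ℝ) : ‖ee t‖ = 1 := by
  unfold ee
  simpa using Complex.norm_exp_ofReal_mul_I (2 * Real.pi * t)

lemma ee_int (n : ℤ) : ee (n : ℝ) = 1 := by
  unfold ee
  have : ((2 * Real.pi * (n:ℝ) : ℝ) : ℂ) * Complex.I = (n : ℂ) * (2 * Real.pi * Complex.I) := by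
    push_cast; ring
  rw [this, Complex.exp_int_mul_two_pi_mul_I]

lemma ee_zero : ee 0 = 1 := by simpa using ee_int 0

lemma ee_eq_one_iff (t : ℝ) : ee t = 1 ↔ ∃ n : ℤ, t = n := by
  constructor
  · intro h
    unfold ee at h
    rw [Complex.exp_eq_one_iff] at h
    obtain ⟨n, hn⟩ := h
    refine ⟨n, ?_⟩
    have h3 : ((2 * Real.pi * t : ℝ) : ℂ) * Complex.I = (((n : ℝ) * (2 * Real.pi) : ℝ) : ℂ) * Complex.I := by
      push_cast at hn ⊢
      linear_combination hn
    have h4 := mul_right_cancel₀ Complex.I_ne_zero h3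
    have h5 : (2 * Real.pi * t : ℝ) = (n : ℝ) * (2 * Real.pi) := by exact_mod_cast h4
    have hπ : (2 * Real.pi : ℝ) ≠ 0 := by positivity
    apply mul_left_cancel₀ hπ
    linarith [h5]
  · rintro ⟨n, rfl⟩; exact ee_int n

lemma ee_conj (t : ℝ) : (starRingEnd ℂ) (ee t) = ee (-t) := by
  unfold ee
  rw [← Complex.exp_conj]
  rw [map_mul, Complex.conj_I, Complex.conj_ofReal]
  congr 1
  push_cast
  ring

lemma ee_nat_mul (M : ℕ) (t : ℝ) : ee ((M : ℝ) * t) = ee t ^ M := by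
  unfold ee
  rw [← Complex.exp_nat_mul]
  congr 1
  push_cast
  ring

lemma geom_bound (w : ℂ) (hw : ‖w‖ = 1) (hw1 : w ≠ 1) (K : ℕ) :
    ‖∑ a ∈ range K, w ^ a‖ ≤ 2 / ‖1 - w‖ := by
  rw [geom_sum_eq hw1]
  rw [norm_div]
  have h1 : ‖w ^ K - 1‖ ≤ 2 := by
    calc ‖w ^ K - 1‖ ≤ ‖w ^ K‖ + ‖(1:ℂ)‖ := norm_sub_le _ _
    _ ≤ 2 := by rw [norm_pow, hw]; norm_num
  have h2 : ‖w - 1‖ = ‖1 - w‖ := norm_sub_rev _ _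
  rw [h2]
  have h3 : (0:ℝ) < ‖1 - w‖ := by
    rw [norm_pos_iff, sub_ne_zero]; exact fun h => hw1 h.symm
  gcongr

lemma geom_bound_Icc (w : ℂ) (hw : ‖w‖ = 1) (hw1 : w ≠ 1) (N : ℕ) :
    ‖∑ M ∈ Finset.Icc 1 N, w ^ M‖ ≤ 2 / ‖1 - w‖ := by
  have : ∑ M ∈ Finset.Icc 1 N, w ^ M = w * ∑ a ∈ range N, w ^ a := by
    have h : Finset.Icc 1 N = Finset.Ico 1 (N+1) := by
      rw [Finset.Ico_add_one_right_eq_Icc]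
    rw [h, Finset.sum_Ico_eq_sum_range, mul_sum]
    apply Finset.sum_congr rfl
    intro i _
    rw [pow_add, pow_one, mul_comm]
  rw [this, norm_mul, hw, one_mul]
  exact geom_bound w hw hw1 N

lemma one_sub_ee_ge (t : ℝ) (δ : ℝ) (hδ : 0 < δ) (h : ∀ j : ℤ, δ ≤ |t - j|) :
    4 * δ ≤ ‖1 - ee t‖ := by
  set s : ℝ := t - round t with hs_def
  have hs : |s| ≤ 1/2 := abs_sub_round t
  have hδs : δ ≤ |s| := h (round t)
  have het : ee t = ee s := by
    have : t = s + (round t : ℝ) := by ring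
    rw [this, ee_add, ee_int, mul_one]
  rw [het]
  -- ‖1 - ee s‖ = 2 * |sin (π * s)|
  have hnorm : ‖1 - ee s‖ = 2 * |Real.sin (Real.pi * s)| := by
    have hre : (1 - ee s).re = 1 - Real.cos (2 * Real.pi * s) := by
      unfold ee
      rw [Complex.sub_re, Complex.one_re, Complex.exp_ofReal_mul_I_re]
    have him : (1 - ee s).im = - Real.sin (2 * Real.pi * s) := by
      unfold ee
      rw [Complex.sub_im, Complex.one_im, Complex.exp_ofReal_mul_I_im]
      ring
    have hns : Complex.normSq (1 - ee s) = (2 * |Real.sin (Real.pi * s)|) ^ 2 := by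
      rw [Complex.normSq_apply, hre, him]
      have h1 : Real.sin (Real.pi * s) ^ 2 = 1/2 - Real.cos (2 * (Real.pi * s))/2 :=
        Real.sin_sq_eq_half_sub _
      have h2 : Real.sin (2*Real.pi*s) ^2 + Real.cos (2*Real.pi*s) ^2 = 1 :=
        Real.sin_sq_add_cos_sq _
      have habs : |Real.sin (Real.pi * s)| ^ 2 = Real.sin (Real.pi * s) ^ 2 := sq_abs _
      have h3 : (2 : ℝ) * (Real.pi * s) = 2 * Real.pi * s := by ring
      rw [h3] at h1
      nlinarith [h1, h2, habs]
    have : ‖(1 - ee s)‖ = Real.sqrt (Complex.normSq (1 - ee s)) := by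
      rw [Complex.norm_def]
    rw [this, hns, Real.sqrt_sq (by positivity)]
  rw [hnorm]
  -- Jordan: 2 * |s| ≤ |sin (π s)|
  have hjord : 2 * |s| ≤ |Real.sin (Real.pi * s)| := by
    have h1 : |Real.sin (Real.pi * s)| = Real.sin (Real.pi * |s|) := by
      rcases abs_cases s with ⟨h2, h3⟩ | ⟨h2, h3⟩
      · rw [h2]
        exact abs_of_nonneg (Real.sin_nonneg_of_nonneg_of_le_pi (by positivity)
          (by nlinarith [Real.pi_pos]))
      · rw [h2]
        have : Real.pi * s = -(Real.pi * -s) := by ring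
        rw [this, Real.sin_neg, abs_neg]
        exact abs_of_nonneg (Real.sin_nonneg_of_nonneg_of_le_pi (by nlinarith [Real.pi_pos])
          (by nlinarith [Real.pi_pos]))
    rw [h1]
    have h4 : Real.pi * |s| ≤ Real.pi / 2 := by nlinarith [Real.pi_pos]
    have := Real.mul_le_sin (x := Real.pi * |s|) (by positivity) h4
    have hπ : Real.pi ≠ 0 := Real.pi_ne_zero
    calc 2 * |s| = 2 / Real.pi * (Real.pi * |s|) := by field_simp
    _ ≤ Real.sin (Real.pi * |s|) := this
  nlinarith [hjord, hδs]

lemma ee_ne_one_of_far (x δ : ℝ) (hδ : 0 < δ) (h : ∀ j : ℤ, δ ≤ |x - j|) : ee x ≠ 1 := by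
  intro hx
  obtain ⟨n, rfl⟩ := (ee_eq_one_iff x).1 hx
  have := h n
  simp at this
  linarith

lemma kernel_trivial (x : ℝ) (K : ℕ) : ‖∑ a ∈ range K, ee ((a:ℝ) * x)‖ ≤ K := by
  calc ‖∑ a ∈ range K, ee ((a:ℝ) * x)‖ ≤ ∑ a ∈ range K, ‖ee ((a:ℝ) * x)‖ :=
        norm_sum_le _ _
  _ = K := by
        have : ∀ a ∈ range K, ‖ee ((a:ℝ) * x)‖ = 1 := fun a _ => ee_norm _
        rw [Finset.sum_congr rfl this]
        simp

lemma kernel_far (x δ : ℝ) (hδ : 0 < δ) (h : ∀ j : ℤ, δ ≤ |x - j|) (K : ℕ) :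
    ‖∑ a ∈ range K, ee ((a:ℝ) * x)‖ ≤ 1 / (2 * δ) := by
  have hne : ee x ≠ 1 := ee_ne_one_of_far x δ hδ h
  have hrw : ∀ a ∈ range K, ee ((a:ℝ) * x) = (ee x) ^ a := fun a _ => ee_nat_mul a x
  rw [Finset.sum_congr rfl hrw]
  have h1 := geom_bound (ee x) (ee_norm x) hne K
  have h2 := one_sub_ee_ge x δ hδ h
  have h3 : (0:ℝ) < 4 * δ := by positivity
  calc ‖∑ a ∈ range K, ee x ^ a‖ ≤ 2 / ‖1 - ee x‖ := h1
  _ ≤ 2 / (4 * δ) := by gcongr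
  _ = 1 / (2 * δ) := by
        rw [div_eq_div_iff (by positivity) (by positivity)]
        ring

noncomputable def PP (ξ : ℝ) (K : ℕ) : ℂ := ∑ a ∈ Finset.range K, ee ((a:ℝ) * ξ)

noncomputable def QQ (xx yy : ℝ) (K : ℕ) : ℂ := PP xx K ^ 2 * PP yy K ^ 2

def TT (K : ℕ) : Finset ((ℕ × ℕ) × (ℕ × ℕ)) :=
  (Finset.range K ×ˢ Finset.range K) ×ˢ (Finset.range K ×ˢ Finset.range K)

def Af (t : (ℕ × ℕ) × (ℕ × ℕ)) : ℝ := (t.1.1 : ℝ) + (t.1.2 : ℝ)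
def Bf (t : (ℕ × ℕ) × (ℕ × ℕ)) : ℝ := (t.2.1 : ℝ) + (t.2.2 : ℝ)

lemma sq_sum_expand (K : ℕ) (f : ℕ → ℂ) :
    (∑ a ∈ range K, f a) ^ 2 = ∑ p ∈ range K ×ˢ range K, f p.1 * f p.2 := by
  rw [Finset.sum_product, sq, Finset.sum_mul_sum]

lemma QQ_expand (xx yy : ℝ) (K : ℕ) :
    QQ xx yy K = ∑ t ∈ TT K, ee (Af t * xx + Bf t * yy) := by
  unfold QQ TT PP
  rw [Finset.sum_product]
  rw [sq_sum_expand K (fun a => ee ((a:ℝ) * xx)), sq_sum_expand K (fun b => ee ((b:ℝ) * yy))]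
  rw [Finset.sum_mul_sum]
  apply Finset.sum_congr rfl
  intro p _
  apply Finset.sum_congr rfl
  intro q _
  rw [← ee_add, ← ee_add, ← ee_add]
  congr 1
  unfold Af Bf
  push_cast
  ring

lemma normSq_QQ (xx yy : ℝ) (K : ℕ) :
    (Complex.normSq (QQ xx yy K) : ℂ) =
      ∑ p ∈ (TT K) ×ˢ (TT K),
        ee ((Af p.1 - Af p.2) * xx + (Bf p.1 - Bf p.2) * yy) := by
  rw [← Complex.mul_conj, QQ_expand, map_sum, Finset.sum_product, Finset.sum_mul_sum]
  apply Finset.sum_congr rfl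
  intro t _
  apply Finset.sum_congr rfl
  intro s _
  rw [ee_conj, ← ee_add]
  congr 1
  ring

lemma card_diag_ge (L : ℕ) :
    L ^ 6 ≤ (((TT (2*L)) ×ˢ (TT (2*L))).filter
      (fun p => Af p.1 = Af p.2 ∧ Bf p.1 = Bf p.2)).card := by
  classical
  set S6 : Finset ((ℕ × ℕ) × ((ℕ × ℕ) × (ℕ × ℕ))) :=
    (range L ×ˢ range L) ×ˢ ((range L ×ˢ range L) ×ˢ (range L ×ˢ range L)) with hS6
  have hcard : S6.card = L ^ 6 := by
    simp [hS6, Finset.card_product]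
    ring
  rw [← hcard]
  apply Finset.card_le_card_of_injOn
    (fun w => (((w.1.1, w.1.2 + w.2.2.1), (w.2.1.1, w.2.1.2 + w.2.2.2)),
               ((w.1.2, w.1.1 + w.2.2.1), (w.2.1.2, w.2.1.1 + w.2.2.2))))
  · intro w hw
    simp only [hS6, Finset.mem_coe, Finset.mem_product, Finset.mem_range] at hw
    obtain ⟨⟨hp, hq⟩, ⟨hp', hq'⟩, hr, hr'⟩ := hw
    refine Finset.mem_filter.2 ⟨?_, ?_⟩
    all_goals simp only [Finset.mem_filter, TT, Finset.mem_product, Finset.mem_range, Af, Bf]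
    · constructor <;> constructor <;> constructor <;> omega
    · constructor <;> (push_cast; ring)
  · intro w1 h1 w2 h2 heq
    obtain ⟨⟨p1, q1⟩, ⟨p1', q1'⟩, r1, r1'⟩ := w1
    obtain ⟨⟨p2, q2⟩, ⟨p2', q2'⟩, r2, r2'⟩ := w2
    simp only [Prod.mk.injEq] at heq ⊢
    omega

lemma kron2 (α β : ℝ)
    (hind : ∀ A B : ℤ, ¬(A = 0 ∧ B = 0) → ∀ n : ℤ, (A:ℝ) * α + (B:ℝ) * β ≠ (n:ℝ))
    (x0 y0 δ : ℝ) (hδ : 0 < δ) :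
    ∃ M : ℕ, 1 ≤ M ∧ (∃ j : ℤ, |(M:ℝ) * α - x0 - (j:ℝ)| < δ) ∧
      (∃ j : ℤ, |(M:ℝ) * β - y0 - (j:ℝ)| < δ) := by
  by_contra hcon
  push_neg at hcon
  have hfar : ∀ M : ℕ, 1 ≤ M →
      (∀ j : ℤ, δ ≤ |(M:ℝ) * α - x0 - (j:ℝ)|) ∨
      (∀ j : ℤ, δ ≤ |(M:ℝ) * β - y0 - (j:ℝ)|) := by
    intro M hM
    by_cases hP : ∃ j : ℤ, |(M:ℝ) * α - x0 - (j:ℝ)| < δ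
    · right; exact hcon M hM hP
    · left; push_neg at hP; exact hP
  set L : ℕ := ⌈1/δ^2⌉₊ + 1 with hLdef
  have hL1 : 1 ≤ L := Nat.le_add_left 1 _
  have hLδ : 1/δ^2 < (L:ℝ) := by
    have h := Nat.le_ceil (1/δ^2)
    have : ((⌈1/δ^2⌉₊ : ℝ) : ℝ) < L := by
      rw [hLdef]; push_cast; linarith
    linarith
  set K : ℕ := 2 * L with hKdef
  -- the frequency and phase of each pair
  set θ : (((ℕ × ℕ) × (ℕ × ℕ)) × ((ℕ × ℕ) × (ℕ × ℕ))) → ℝ :=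
    fun p => (Af p.1 - Af p.2) * α + (Bf p.1 - Bf p.2) * β with hθdef
  set φF : (((ℕ × ℕ) × (ℕ × ℕ)) × ((ℕ × ℕ) × (ℕ × ℕ))) → ℝ :=
    fun p => -((Af p.1 - Af p.2) * x0 + (Bf p.1 - Bf p.2) * y0) with hφdef
  set D := ((TT K) ×ˢ (TT K)).filter (fun p => Af p.1 = Af p.2 ∧ Bf p.1 = Bf p.2) with hDdef
  set R := ((TT K) ×ˢ (TT K)) \ D with hRdef
  have hDsub : D ⊆ (TT K) ×ˢ (TT K) := Finset.filter_subset _ _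
  -- off-diagonal frequencies are not integers
  have hoff : ∀ p ∈ R, ee (θ p) ≠ 1 := by
    intro p hp h1
    rw [hRdef, Finset.mem_sdiff, hDdef, Finset.mem_filter] at hp
    obtain ⟨hp1, hp2⟩ := hp
    have hnand : ¬(Af p.1 = Af p.2 ∧ Bf p.1 = Bf p.2) := fun h => hp2 ⟨hp1, h⟩
    obtain ⟨n, hn⟩ := (ee_eq_one_iff _).1 h1
    set Ai : ℤ := ((p.1.1.1 : ℤ) + p.1.1.2) - ((p.2.1.1 : ℤ) + p.2.1.2) with hAi
    set Bi : ℤ := ((p.1.2.1 : ℤ) + p.1.2.2) - ((p.2.2.1 : ℤ) + p.2.2.2) with hBi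
    have hAc : Af p.1 - Af p.2 = (Ai : ℝ) := by unfold Af; rw [hAi]; push_cast; ring
    have hBc : Bf p.1 - Bf p.2 = (Bi : ℝ) := by unfold Bf; rw [hBi]; push_cast; ring
    have hAB : ¬(Ai = 0 ∧ Bi = 0) := by
      rintro ⟨hA0, hB0⟩
      apply hnand
      constructor
      · have : Af p.1 - Af p.2 = 0 := by rw [hAc, hA0]; simp
        linarith
      · have : Bf p.1 - Bf p.2 = 0 := by rw [hBc, hB0]; simp
        linarith
    exact hind Ai Bi hAB n (by rw [← hAc, ← hBc]; rw [hθdef] at hn; exact hn)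
  set E : ℝ := ∑ p ∈ R, 2 / ‖1 - ee (θ p)‖ with hEdef
  have hE0 : 0 ≤ E := Finset.sum_nonneg fun p _ => by positivity
  -- lower bound for the Weyl sum
  have hsplit : ∀ N : ℕ,
      (D.card : ℝ) * N - E ≤
        ∑ M ∈ Finset.Icc 1 N, Complex.normSq (QQ ((M:ℝ)*α - x0) ((M:ℝ)*β - y0) K) := by
    intro N
    have hid : ((∑ M ∈ Finset.Icc 1 N,
          Complex.normSq (QQ ((M:ℝ)*α - x0) ((M:ℝ)*β - y0) K) : ℝ) : ℂ) =
        ∑ p ∈ (TT K) ×ˢ (TT K), ee (φF p) * ∑ M ∈ Finset.Icc 1 N, (ee (θ p))^M := by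
      push_cast
      rw [Finset.sum_congr rfl (fun (M : ℕ) _ => normSq_QQ ((M:ℝ)*α - x0) ((M:ℝ)*β - y0) K)]
      rw [Finset.sum_comm]
      apply Finset.sum_congr rfl
      intro p _
      rw [Finset.mul_sum]
      apply Finset.sum_congr rfl
      intro M _
      have harg : (Af p.1 - Af p.2) * ((M:ℝ)*α - x0) + (Bf p.1 - Bf p.2) * ((M:ℝ)*β - y0)
          = φF p + (M:ℝ) * θ p := by
        rw [hθdef, hφdef]; ring
      rw [harg, ee_add, ee_nat_mul]
    have hDsum : ∑ p ∈ D, ee (φF p) * ∑ M ∈ Finset.Icc 1 N, (ee (θ p))^M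
        = (D.card : ℂ) * N := by
      rw [Finset.sum_congr rfl (g := fun _ => (N : ℂ)) ?_]
      · rw [Finset.sum_const, nsmul_eq_mul]
      · intro p hp
        rw [hDdef, Finset.mem_filter] at hp
        obtain ⟨_, hA, hB⟩ := hp
        have hθ0 : θ p = 0 := by rw [hθdef]; simp; rw [hA, hB]; ring
        have hφ0 : φF p = 0 := by rw [hφdef]; simp; rw [hA, hB]; ring
        rw [hθ0, hφ0, ee_zero]
        simp [Nat.card_Icc]
    have hsum_split : ∑ p ∈ (TT K) ×ˢ (TT K), ee (φF p) * ∑ M ∈ Finset.Icc 1 N, (ee (θ p))^M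
        = (∑ p ∈ R, ee (φF p) * ∑ M ∈ Finset.Icc 1 N, (ee (θ p))^M) + (D.card : ℂ) * N := by
      rw [← hDsum, hRdef]
      exact (Finset.sum_sdiff hDsub).symm
    have hRnorm : ‖∑ p ∈ R, ee (φF p) * ∑ M ∈ Finset.Icc 1 N, (ee (θ p))^M‖ ≤ E := by
      calc ‖∑ p ∈ R, ee (φF p) * ∑ M ∈ Finset.Icc 1 N, (ee (θ p))^M‖
          ≤ ∑ p ∈ R, ‖ee (φF p) * ∑ M ∈ Finset.Icc 1 N, (ee (θ p))^M‖ := norm_sum_le _ _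
        _ ≤ E := by
            rw [hEdef]
            apply Finset.sum_le_sum
            intro p hp
            rw [norm_mul, ee_norm, one_mul]
            exact geom_bound_Icc _ (ee_norm _) (hoff p hp) N
    -- take real parts
    have hre := congrArg Complex.re hid
    rw [Complex.ofReal_re, hsum_split] at hre
    have h1 : ((∑ p ∈ R, ee (φF p) * ∑ M ∈ Finset.Icc 1 N, (ee (θ p))^M) + (D.card : ℂ) * N).re
        = (∑ p ∈ R, ee (φF p) * ∑ M ∈ Finset.Icc 1 N, (ee (θ p))^M).re + (D.card : ℝ) * N := by
      rw [Complex.add_re]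
      congr 1
      push_cast
      simp
    rw [h1] at hre
    have h2 : -E ≤ (∑ p ∈ R, ee (φF p) * ∑ M ∈ Finset.Icc 1 N, (ee (θ p))^M).re := by
      have habs : |(∑ p ∈ R, ee (φF p) * ∑ M ∈ Finset.Icc 1 N, (ee (θ p))^M).re|
          ≤ ‖∑ p ∈ R, ee (φF p) * ∑ M ∈ Finset.Icc 1 N, (ee (θ p))^M‖ := by
        exact Complex.abs_re_le_norm _
      have h3 := neg_le_neg hRnorm
      calc -E ≤ -‖∑ p ∈ R, ee (φF p) * ∑ M ∈ Finset.Icc 1 N, (ee (θ p))^M‖ := h3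
        _ ≤ -|(∑ p ∈ R, ee (φF p) * ∑ M ∈ Finset.Icc 1 N, (ee (θ p))^M).re| := neg_le_neg habs
        _ ≤ _ := neg_abs_le _
    linarith [hre, h2]
  -- upper bound for the Weyl sum
  have hup : ∀ N : ℕ,
      ∑ M ∈ Finset.Icc 1 N, Complex.normSq (QQ ((M:ℝ)*α - x0) ((M:ℝ)*β - y0) K)
        ≤ (N : ℝ) * ((L:ℝ)^4 / δ^4) := by
    intro N
    have hper : ∀ M ∈ Finset.Icc 1 N,
        Complex.normSq (QQ ((M:ℝ)*α - x0) ((M:ℝ)*β - y0) K) ≤ (L:ℝ)^4 / δ^4 := by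
      intro M hM
      rw [Finset.mem_Icc] at hM
      have hQnorm : ‖QQ ((M:ℝ)*α - x0) ((M:ℝ)*β - y0) K‖
          = ‖PP ((M:ℝ)*α - x0) K‖^2 * ‖PP ((M:ℝ)*β - y0) K‖^2 := by
        unfold QQ
        rw [norm_mul, norm_pow, norm_pow]
      have hQle : ‖QQ ((M:ℝ)*α - x0) ((M:ℝ)*β - y0) K‖ ≤ (1/(2*δ))^2 * (K:ℝ)^2 := by
        rw [hQnorm]
        rcases hfar M hM.1 with hfx | hfy
        · have h1 : ‖PP ((M:ℝ)*α - x0) K‖ ≤ 1/(2*δ) := kernel_far _ δ hδ hfx K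
          have h2 : ‖PP ((M:ℝ)*β - y0) K‖ ≤ (K:ℝ) := kernel_trivial _ K
          gcongr <;> first | exact norm_nonneg _ | assumption
        · have h1 : ‖PP ((M:ℝ)*α - x0) K‖ ≤ (K:ℝ) := kernel_trivial _ K
          have h2 : ‖PP ((M:ℝ)*β - y0) K‖ ≤ 1/(2*δ) := kernel_far _ δ hδ hfy K
          calc ‖PP ((M:ℝ)*α - x0) K‖^2 * ‖PP ((M:ℝ)*β - y0) K‖^2
              ≤ (K:ℝ)^2 * (1/(2*δ))^2 := by
                gcongr <;> first | exact norm_nonneg _ | assumption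
            _ = (1/(2*δ))^2 * (K:ℝ)^2 := by ring
      have hns : Complex.normSq (QQ ((M:ℝ)*α - x0) ((M:ℝ)*β - y0) K)
          = ‖QQ ((M:ℝ)*α - x0) ((M:ℝ)*β - y0) K‖^2 := by
        rw [Complex.normSq_eq_norm_sq]
      rw [hns]
      have h3 : ‖QQ ((M:ℝ)*α - x0) ((M:ℝ)*β - y0) K‖^2 ≤ ((1/(2*δ))^2 * (K:ℝ)^2)^2 := by
        apply pow_le_pow_left₀ (norm_nonneg _) hQle
      refine h3.trans (le_of_eq ?_)
      have hKc : (K:ℝ) = 2 * (L:ℝ) := by rw [hKdef]; push_cast; ring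
      rw [hKc]
      field_simp
    calc ∑ M ∈ Finset.Icc 1 N, Complex.normSq (QQ ((M:ℝ)*α - x0) ((M:ℝ)*β - y0) K)
        ≤ ∑ M ∈ Finset.Icc 1 N, ((L:ℝ)^4 / δ^4) := Finset.sum_le_sum hper
      _ = (N : ℝ) * ((L:ℝ)^4 / δ^4) := by
          rw [Finset.sum_const, Nat.card_Icc]
          simp [nsmul_eq_mul]
  -- the diagonal is big
  have hDge : ((L:ℝ))^6 ≤ (D.card : ℝ) := by
    have h := card_diag_ge L
    rw [← hKdef] at h
    rw [hDdef]
    exact_mod_cast h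
  -- conclusion
  have hL0 : (0:ℝ) < L := by exact_mod_cast hL1
  have hnn : (0:ℝ) ≤ 1/δ^2 := by positivity
  have h2 : 1/δ^4 < (L:ℝ)^2 := by
    have h := mul_lt_mul'' hLδ hLδ hnn hnn
    have e1 : 1/δ^2 * (1/δ^2) = 1/δ^4 := by field_simp
    have e2 : (L:ℝ) * (L:ℝ) = (L:ℝ)^2 := by ring
    rw [e1, e2] at h
    exact h
  have hgap : 0 < (D.card : ℝ) - (L:ℝ)^4 / δ^4 := by
    have h4 : (0:ℝ) < (L:ℝ)^4 := by positivity
    have h5 : (L:ℝ)^4 / δ^4 = (L:ℝ)^4 * (1/δ^4) := by ring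
    have h6 : (L:ℝ)^4 * (1/δ^4) < (L:ℝ)^4 * (L:ℝ)^2 := by
      apply mul_lt_mul_of_pos_left h2 h4
    have h7 : (L:ℝ)^4 * (L:ℝ)^2 = (L:ℝ)^6 := by ring
    linarith [hDge]
  obtain ⟨N, hN⟩ := exists_nat_gt (E / ((D.card : ℝ) - (L:ℝ)^4 / δ^4))
  have hNgap : E < (N:ℝ) * ((D.card : ℝ) - (L:ℝ)^4 / δ^4) := by
    rw [div_lt_iff₀ hgap] at hN
    linarith
  have hlow := hsplit N
  have hupN := hup N
  have hexp : (N:ℝ) * ((D.card : ℝ) - (L:ℝ)^4 / δ^4)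
      = (D.card : ℝ) * (N:ℝ) - (N:ℝ) * ((L:ℝ)^4 / δ^4) := by ring
  rw [hexp] at hNgap
  linarith


lemma beatty_count (α : ℝ) (hirr : Irrational α) (h0 : 0 < α) (h1 : α < 1)
    (m : ℤ) (hm : 0 ≤ m) :
    ((Finset.Icc 1 m).filter (fun k => k ∈ beatty α)).card
      = (⌊((m:ℝ)+1) * α⌋).toNat := by
  classical
  set Mr : ℝ := (m:ℝ) + 1 with hMr
  have hm' : (0:ℝ) ≤ (m:ℝ) := by exact_mod_cast hm
  have hMr1 : 1 ≤ Mr := by rw [hMr]; linarith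
  have hMα : 0 < Mr * α := by positivity
  have hflnn : 0 ≤ ⌊Mr * α⌋ := Int.floor_nonneg.2 (le_of_lt hMα)
  have hMirr : Irrational (Mr * α) := by
    have he : Mr = ((m + 1 : ℤ) : ℝ) := by rw [hMr]; push_cast; ring
    rw [he]
    exact hirr.intCast_mul (by omega)
  set s : Finset ℕ := Finset.Icc 1 (⌊Mr * α⌋).toNat with hs
  have himg : (Finset.Icc 1 m).filter (fun k => k ∈ beatty α)
      = s.image (fun n : ℕ => ⌊(n:ℝ)/α⌋) := by
    ext k
    simp only [Finset.mem_filter, Finset.mem_Icc, Finset.mem_image, hs, beatty,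
      Set.mem_setOf_eq]
    constructor
    · rintro ⟨⟨hk1, hkm⟩, n, hn0, rfl⟩
      refine ⟨n, ⟨hn0, ?_⟩, rfl⟩
      have h2 : (n:ℝ)/α < ((⌊(n:ℝ)/α⌋ : ℝ) + 1) := Int.lt_floor_add_one _
      have h3 : (⌊(n:ℝ)/α⌋ : ℝ) ≤ (m : ℝ) := by exact_mod_cast hkm
      have h4 : (n:ℝ)/α < Mr := by rw [hMr]; linarith
      have h5 : (n:ℝ) < Mr * α := by
        rw [div_lt_iff₀ h0] at h4; linarith
      have h6 : (n:ℤ) ≤ ⌊Mr * α⌋ := Int.le_floor.2 (by exact_mod_cast h5.le)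
      exact (Int.le_toNat hflnn).2 h6
    · rintro ⟨n, ⟨hn1, hn2⟩, rfl⟩
      have h6 : (n:ℤ) ≤ ⌊Mr * α⌋ := (Int.le_toNat hflnn).1 hn2
      have h7 : (n:ℝ) ≤ Mr * α := by
        calc (n:ℝ) ≤ (⌊Mr * α⌋ : ℝ) := by exact_mod_cast h6
        _ ≤ Mr * α := Int.floor_le _
      have h8 : (n:ℝ) ≠ Mr * α := by
        intro h; exact hMirr ⟨(n:ℚ), by push_cast; exact h⟩
      have h9 : (n:ℝ) < Mr * α := lt_of_le_of_ne h7 h8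
      have h10 : (n:ℝ)/α < Mr := by rw [div_lt_iff₀ h0]; linarith
      have h11 : ⌊(n:ℝ)/α⌋ < m + 1 := by
        apply Int.floor_lt.2
        rw [hMr] at h10; push_cast; linarith
      have h12 : 1 ≤ ⌊(n:ℝ)/α⌋ := by
        apply Int.le_floor.2
        have hn' : α ≤ (n:ℝ) := by
          calc α ≤ 1 := h1.le
          _ ≤ (n:ℝ) := by exact_mod_cast hn1
        rw [le_div_iff₀ h0]
        push_cast; linarith
      exact ⟨⟨h12, by omega⟩, n, by omega, rfl⟩
  rw [himg]
  have hmono : ∀ a ∈ s, ∀ b ∈ s, a < b → ⌊(a:ℝ)/α⌋ < ⌊(b:ℝ)/α⌋ := by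
    intro a _ b _ hab
    have h1' : (1:ℝ) < 1/α := by rw [lt_div_iff₀ h0]; linarith
    have hstep : ((a:ℝ)+1)/α ≤ (b:ℝ)/α := by
      gcongr
      exact_mod_cast hab
    have hfl : (⌊(a:ℝ)/α⌋ : ℝ) ≤ (a:ℝ)/α := Int.floor_le _
    have hsum : ((a:ℝ)+1)/α = (a:ℝ)/α + 1/α := by ring
    have : ((⌊(a:ℝ)/α⌋ + 1 : ℤ) : ℝ) ≤ (b:ℝ)/α := by
      push_cast
      linarith [hstep, hsum ▸ hstep]
    have := Int.le_floor.2 this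
    omega
  rw [Finset.card_image_of_injOn, hs, Nat.card_Icc]
  · omega
  · intro a ha b hb hab
    by_contra hne
    rcases lt_or_gt_of_ne hne with h | h
    · exact absurd hab (ne_of_lt (hmono a ha b hb h))
    · exact absurd hab.symm (ne_of_lt (hmono b hb a ha h))

lemma perturbed_count_le (β : ℝ) (h0 : 0 < β) (bt : ℕ → ℤ)
    (hmono : ∀ n m : ℕ, 0 < n → n < m → bt n < bt m)
    (hclose : ∀ n : ℕ, 0 < n → |bt n - ⌊(n:ℝ)/β⌋| ≤ 1) (m : ℤ) (hm : 0 ≤ m) :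
    ((Finset.Icc 1 m).filter (fun k => ∃ n : ℕ, 0 < n ∧ bt n = k)).card
      ≤ (⌊((m:ℝ)+2) * β⌋).toNat := by
  classical
  have hm' : (0:ℝ) ≤ (m:ℝ) := by exact_mod_cast hm
  have hflnn : 0 ≤ ⌊((m:ℝ)+2) * β⌋ := Int.floor_nonneg.2 (by positivity)
  have hcard : (Finset.Icc 1 (⌊((m:ℝ)+2) * β⌋).toNat).card = (⌊((m:ℝ)+2) * β⌋).toNat := by
    rw [Nat.card_Icc]; omega
  rw [← hcard]
  apply Finset.card_le_card_of_injOn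
    (fun k => if h : ∃ n : ℕ, 0 < n ∧ bt n = k then h.choose else 0)
  · intro k hk
    rw [Finset.mem_coe, Finset.mem_filter] at hk
    obtain ⟨hk1, hex⟩ := hk
    rw [Finset.mem_Icc] at hk1
    beta_reduce
    rw [dif_pos hex]
    obtain ⟨hn0, hbtn⟩ := hex.choose_spec
    set n := hex.choose with hn
    rw [Finset.mem_coe, Finset.mem_Icc]
    refine ⟨hn0, ?_⟩
    have h1 := hclose n hn0
    rw [abs_le] at h1
    have h2 : ⌊(n:ℝ)/β⌋ ≤ m + 1 := by omega
    have h3 : (n:ℝ)/β < (m:ℝ) + 2 := by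
      have h4 : (n:ℝ)/β < (⌊(n:ℝ)/β⌋ : ℝ) + 1 := Int.lt_floor_add_one _
      have h5 : (⌊(n:ℝ)/β⌋ : ℝ) ≤ (m:ℝ) + 1 := by exact_mod_cast h2
      linarith
    have h6 : (n:ℝ) < ((m:ℝ)+2) * β := by rw [div_lt_iff₀ h0] at h3; linarith
    have h7 : (n:ℤ) ≤ ⌊((m:ℝ)+2) * β⌋ := Int.le_floor.2 (by exact_mod_cast h6.le)
    exact (Int.le_toNat hflnn).2 h7
  · intro k1 hk1 k2 hk2 heq
    simp only [Finset.coe_filter, Set.mem_setOf_eq] at hk1 hk2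
    obtain ⟨_, hex1⟩ := hk1
    obtain ⟨_, hex2⟩ := hk2
    simp only at heq
    rw [dif_pos hex1, dif_pos hex2] at heq
    obtain ⟨h10, h11⟩ := hex1.choose_spec
    obtain ⟨h20, h21⟩ := hex2.choose_spec
    rw [← h11, ← h21, heq]

lemma indep_helper (α β : ℝ) (hli : LinearIndependent ℚ ![(1 : ℝ), α, β]) :
    ∀ A B : ℤ, ¬(A = 0 ∧ B = 0) → ∀ n : ℤ, (A:ℝ) * α + (B:ℝ) * β ≠ (n:ℝ) := by
  intro A B hAB n h
  rw [Fintype.linearIndependent_iff] at hli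
  have h0 := hli ![(-n : ℚ), (A:ℚ), (B:ℚ)] ?_
  · apply hAB
    constructor
    · have h1 := h0 1
      simp at h1
      exact_mod_cast h1
    · have h2 := h0 2
      simp at h2
      exact_mod_cast h2
  · rw [Fin.sum_univ_three]
    simp only [Matrix.cons_val_zero, Matrix.cons_val_one, Matrix.head_cons]
    rw [show (![(-n : ℚ), (A:ℚ), (B:ℚ)] 2) = (B:ℚ) by rfl,
        show (![(1 : ℝ), α, β] 2) = β by rfl]
    rw [Rat.smul_def, Rat.smul_def, Rat.smul_def]
    push_cast
    linarith [h]

set_option maxHeartbeats 2000000 in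
theorem no_small_perturbation_partition (α β γ : ℝ)
    (hirra : Irrational α) (hirrb : Irrational β) (hirrc : Irrational γ)
    (ha : 0 < α) (hb : 0 < β) (hc : 0 < γ) (hsum : α + β + γ = 1)
    (halpha : 1 / 3 < α)
    (hli : LinearIndependent ℚ ![(1 : ℝ), α, β]) :
    ¬ ∃ bt ct : ℕ → ℤ,
      (∀ n m : ℕ, 0 < n → n < m → bt n < bt m) ∧
      (∀ n m : ℕ, 0 < n → n < m → ct n < ct m) ∧
      (∀ n : ℕ, 0 < n → |bt n - ⌊(n : ℝ) / β⌋| ≤ 1) ∧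
      (∀ n : ℕ, 0 < n → |ct n - ⌊(n : ℝ) / γ⌋| ≤ 1) ∧
      (∀ k : ℤ, 0 < k →
        ((k ∈ beatty α ∧ ¬(∃ n : ℕ, 0 < n ∧ bt n = k) ∧ ¬(∃ n : ℕ, 0 < n ∧ ct n = k)) ∨
         (k ∉ beatty α ∧ (∃ n : ℕ, 0 < n ∧ bt n = k) ∧ ¬(∃ n : ℕ, 0 < n ∧ ct n = k)) ∨
         (k ∉ beatty α ∧ ¬(∃ n : ℕ, 0 < n ∧ bt n = k) ∧ (∃ n : ℕ, 0 < n ∧ ct n = k)))) := by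
  rintro ⟨bt, ct, hbtmono, hctmono, hbtclose, hctclose, hpart⟩
  have hα1 : α < 1 := by linarith
  have hind := indep_helper α β hli
  obtain ⟨M, hM1, ⟨j, hj⟩, ⟨k, hk⟩⟩ :=
    kron2 α β hind (1 - α/4) (γ + α/2) (α/16) (by linarith)
  set m : ℤ := (M : ℤ) - 1 with hmdef
  have hM1' : (1:ℤ) ≤ (M:ℤ) := by exact_mod_cast hM1
  have hm0 : 0 ≤ m := by omega
  have hMm : ((M:ℝ)) = (m:ℝ) + 1 := by rw [hmdef]; push_cast; ring
  -- fractional parts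
  have habsj := abs_lt.1 hj
  have habsk := abs_lt.1 hk
  have hflj : ⌊(M:ℝ)*α⌋ = j := by
    rw [Int.floor_eq_iff]
    constructor <;> [linarith [habsj.1]; linarith [habsj.2]]
  have hflk : ⌊(M:ℝ)*β⌋ = k := by
    rw [Int.floor_eq_iff]
    constructor
    · push_cast; nlinarith [habsk.1]
    · push_cast; nlinarith [habsk.2]
  set u : ℝ := Int.fract ((M:ℝ)*α) with hudef
  set v : ℝ := Int.fract ((M:ℝ)*β) with hvdef
  set w : ℝ := Int.fract ((M:ℝ)*γ) with hwdef
  have hu_eq : u = (M:ℝ)*α - j := by rw [hudef, Int.fract, hflj]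
  have hv_eq : v = (M:ℝ)*β - k := by rw [hvdef, Int.fract, hflk]
  have hu1 : 1 - 5*α/16 < u := by rw [hu_eq]; linarith [habsj.1]
  have hu2 : u < 1 - 3*α/16 := by rw [hu_eq]; linarith [habsj.2]
  have hv1 : γ + 7*α/16 < v := by rw [hv_eq]; linarith [habsk.1]
  have hv2 : v < γ + 9*α/16 := by rw [hv_eq]; linarith [habsk.2]
  have hw0 : 0 ≤ w := Int.fract_nonneg _
  have hw1 : w < 1 := Int.fract_lt_one _
  -- the integer t
  have hsum_fract : u + v + w
      = ((m:ℝ) + 1) - ((⌊(M:ℝ)*α⌋ : ℝ) + (⌊(M:ℝ)*β⌋ : ℝ) + (⌊(M:ℝ)*γ⌋ : ℝ)) := by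
    rw [hudef, hvdef, hwdef, Int.fract, Int.fract, Int.fract, ← hMm]
    linear_combination (M:ℝ) * hsum
  set t : ℤ := (m + 1) - (⌊(M:ℝ)*α⌋ + ⌊(M:ℝ)*β⌋ + ⌊(M:ℝ)*γ⌋) with htdef
  have ht_real : (t:ℝ) = u + v + w := by
    rw [htdef, hsum_fract]; push_cast; ring
  have ht2 : t = 2 := by
    have h1 : (1:ℝ) < (t:ℝ) := by rw [ht_real]; nlinarith [hu1, hv1, hw0, hc]
    have h2 : (t:ℝ) < 3 := by
      rw [ht_real]
      have hu3 : u < 1 := by linarith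
      have hv3 : v < 1 := by nlinarith [hv2, hsum, ha, hb]
      linarith
    have h1' : (1:ℤ) < t := by exact_mod_cast h1
    have h2' : t < 3 := by exact_mod_cast h2
    omega
  have hfloorsum : ⌊(M:ℝ)*α⌋ + ⌊(M:ℝ)*β⌋ + ⌊(M:ℝ)*γ⌋ = m - 1 := by omega
  -- shifted floors
  have hβshift : ⌊((m:ℝ)+2)*β⌋ = ⌊(M:ℝ)*β⌋ := by
    have he : ((m:ℝ)+2)*β = (M:ℝ)*β + β := by rw [hMm]; ring
    rw [he, Int.floor_eq_iff]
    have hfl : (⌊(M:ℝ)*β⌋ : ℝ) ≤ (M:ℝ)*β := Int.floor_le _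
    have hvb : v + β < 1 := by nlinarith [hv2, hsum]
    have hv_e : v = (M:ℝ)*β - ⌊(M:ℝ)*β⌋ := by rw [hvdef, Int.fract]
    constructor
    · linarith
    · push_cast; linarith
  have hγshift : ⌊((m:ℝ)+2)*γ⌋ = ⌊(M:ℝ)*γ⌋ := by
    have he : ((m:ℝ)+2)*γ = (M:ℝ)*γ + γ := by rw [hMm]; ring
    rw [he, Int.floor_eq_iff]
    have hfl : (⌊(M:ℝ)*γ⌋ : ℝ) ≤ (M:ℝ)*γ := Int.floor_le _
    have hwg : w + γ < 1 := by
      have : u + v + w = 2 := by rw [← ht_real, ht2]; norm_num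
      nlinarith [hu1, hv1]
    have hw_e : w = (M:ℝ)*γ - ⌊(M:ℝ)*γ⌋ := by rw [hwdef, Int.fract]
    constructor
    · linarith
    · push_cast; linarith
  -- counting
  set S := Finset.Icc (1:ℤ) m with hSdef
  set P1 : ℤ → Prop := fun k => k ∈ beatty α with hP1
  set P2 : ℤ → Prop := fun k => ∃ n : ℕ, 0 < n ∧ bt n = k with hP2
  set P3 : ℤ → Prop := fun k => ∃ n : ℕ, 0 < n ∧ ct n = k with hP3
  have hU : (S.filter P1 ∪ S.filter P2) ∪ S.filter P3 = S := by
    ext x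
    simp only [Finset.mem_union, Finset.mem_filter]
    constructor
    · rintro ((⟨h,_⟩|⟨h,_⟩)|⟨h,_⟩) <;> exact h
    · intro hx
      have hx0 : 0 < x := by
        rw [hSdef, Finset.mem_Icc] at hx; omega
      rcases hpart x hx0 with ⟨h1,_,_⟩|⟨_,h2,_⟩|⟨_,_,h3⟩
      · exact Or.inl (Or.inl ⟨hx, h1⟩)
      · exact Or.inl (Or.inr ⟨hx, h2⟩)
      · exact Or.inr ⟨hx, h3⟩
  have hd12 : Disjoint (S.filter P1) (S.filter P2) := by
    rw [Finset.disjoint_left]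
    intro x hx1 hx2
    rw [Finset.mem_filter] at hx1 hx2
    have hx0 : 0 < x := by rw [hSdef, Finset.mem_Icc] at hx1; omega
    rcases hpart x hx0 with ⟨_,h2,_⟩|⟨h1,_,_⟩|⟨h1,h2,_⟩
    · exact h2 hx2.2
    · exact h1 hx1.2
    · exact h1 hx1.2
  have hd3 : Disjoint (S.filter P1 ∪ S.filter P2) (S.filter P3) := by
    rw [Finset.disjoint_left]
    intro x hx1 hx3
    rw [Finset.mem_union] at hx1
    rw [Finset.mem_filter] at hx3
    have hx0 : 0 < x := by rw [hSdef, Finset.mem_Icc] at hx3; omega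
    rcases hpart x hx0 with ⟨_,_,h3⟩|⟨_,_,h3⟩|⟨h1,h2,_⟩
    · exact h3 hx3.2
    · exact h3 hx3.2
    · rcases hx1 with hx1|hx1 <;> rw [Finset.mem_filter] at hx1
      · exact h1 hx1.2
      · exact h2 hx1.2
  have hcards : S.card = (S.filter P1).card + (S.filter P2).card + (S.filter P3).card := by
    conv_lhs => rw [← hU]
    rw [Finset.card_union_of_disjoint hd3, Finset.card_union_of_disjoint hd12]
  have hScard : S.card = m.toNat := by
    rw [hSdef, Int.card_Icc]
    congr 1
    omega
  have hc1 : (S.filter P1).card = (⌊((m:ℝ)+1) * α⌋).toNat :=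
    beatty_count α hirra ha hα1 m hm0
  have hc2 : (S.filter P2).card ≤ (⌊((m:ℝ)+2) * β⌋).toNat :=
    perturbed_count_le β hb bt hbtmono hbtclose m hm0
  have hc3 : (S.filter P3).card ≤ (⌊((m:ℝ)+2) * γ⌋).toNat :=
    perturbed_count_le γ hc ct hctmono hctclose m hm0
  -- assemble the contradiction
  have hma : ((m:ℝ)+1) * α = (M:ℝ) * α := by rw [hMm]
  have hfl1nn : 0 ≤ ⌊((m:ℝ)+1) * α⌋ := by
    apply Int.floor_nonneg.2
    have : (0:ℝ) ≤ (m:ℝ) + 1 := by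
      have : (0:ℝ) ≤ (m:ℝ) := by exact_mod_cast hm0
      linarith
    positivity
  have hfl2nn : 0 ≤ ⌊((m:ℝ)+2) * β⌋ := by
    apply Int.floor_nonneg.2
    have : (0:ℝ) ≤ (m:ℝ) := by exact_mod_cast hm0
    positivity
  have hfl3nn : 0 ≤ ⌊((m:ℝ)+2) * γ⌋ := by
    apply Int.floor_nonneg.2
    have : (0:ℝ) ≤ (m:ℝ) := by exact_mod_cast hm0
    positivity
  have hm_le : m ≤ ⌊((m:ℝ)+1) * α⌋ + ⌊((m:ℝ)+2) * β⌋ + ⌊((m:ℝ)+2) * γ⌋ := by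
    have h1 : m.toNat ≤ (⌊((m:ℝ)+1) * α⌋).toNat + (⌊((m:ℝ)+2) * β⌋).toNat
        + (⌊((m:ℝ)+2) * γ⌋).toNat := by
      rw [← hScard, hcards, hc1]
      omega
    omega
  rw [hma, hβshift, hγshift, hflj] at hm_le
  rw [← hflj] at hm_le
  omega
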